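/- arXiv:2104.13331 — 3 statements merged into one kernel-verified Lean document; each statement's English description precedes it below -/
import Mathlib

section
/- Let k be an algebraically closed field, R a reduced finitely generated k-algebra, M a finitely generated R-module, and m ∈ M. Then the set D(m) = { p ∈ Spec R : the image of m under the natural map M → M ⊗_R κ(p) is nonzero }, where κ(p) denotes the residue field of the localization of R at p, is a constructible subset of the prime spectrum Spec R with its Zariski topology. -/
/-- A subset of a topological space is constructible if it is a finite union of sets of the
form `U ∩ Z` with `U` open and `Z` closed. -/
def IsConstructibleSet {X : Type*} [TopologicalSpace X] (s : Set X) : Prop :=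
  ∃ S : Finset (Set X × Set X),
    (∀ t ∈ S, IsOpen t.1 ∧ IsClosed t.2) ∧ s = ⋃ t ∈ S, t.1 ∩ t.2

/-- The residue field `κ(p)` of a prime `p`, i.e. the residue field of the localization at `p`. -/
noncomputable abbrev residueFieldAt {R : Type*} [CommRing R] (p : PrimeSpectrum R) : Type _ :=
  IsLocalRing.ResidueField (Localization.AtPrime p.asIdeal)

open TensorProduct

section Aux

variable {R : Type*} [CommRing R]

lemma RFA.isUnit_algebraMap (p : PrimeSpectrum R) {s : R} (hs : s ∉ p.asIdeal) :
    IsUnit (algebraMap R (residueFieldAt p) s) := by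
  rw [IsScalarTower.algebraMap_apply R (Localization.AtPrime p.asIdeal) (residueFieldAt p)]
  exact (IsLocalization.map_units (Localization.AtPrime p.asIdeal)
    (⟨s, hs⟩ : p.asIdeal.primeCompl)).map
    (algebraMap (Localization.AtPrime p.asIdeal) (residueFieldAt p))

lemma RFA.span_image_eq_top {M : Type*} [AddCommGroup M] [Module R M]
    (p : PrimeSpectrum R) (s0 : Set M)
    (H : ∀ y : M, ∃ s ∉ p.asIdeal, s • y ∈ Submodule.span R s0) :
    Submodule.span (residueFieldAt p)
      ((fun x : M => (1 : residueFieldAt p) ⊗ₜ[R] x) '' s0) = ⊤ := by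
  set κ := residueFieldAt p with hκ
  set f : M → κ ⊗[R] M := fun x => (1 : κ) ⊗ₜ[R] x with hf
  have hstep : ∀ x ∈ Submodule.span R s0, (1 : κ) ⊗ₜ[R] x ∈ Submodule.span κ (f '' s0) := by
    intro x hx
    have h1 : (TensorProduct.mk R κ M 1) x ∈
        Submodule.map (TensorProduct.mk R κ M 1) (Submodule.span R s0) :=
      Submodule.mem_map_of_mem hx
    rw [Submodule.map_span] at h1
    have h2 := Submodule.span_le_restrictScalars R κ
      ((TensorProduct.mk R κ M 1) '' s0) h1
    exact h2
  have key : ∀ y : M, (1 : κ) ⊗ₜ[R] y ∈ Submodule.span κ (f '' s0) := by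
    intro y
    obtain ⟨s, hs, hsy⟩ := H y
    obtain ⟨u, hu⟩ := RFA.isUnit_algebraMap p hs
    have h1 : (algebraMap R κ s) • ((1 : κ) ⊗ₜ[R] y) ∈ Submodule.span κ (f '' s0) := by
      rw [algebraMap_smul, ← tmul_smul]
      exact hstep _ hsy
    rw [← hu] at h1
    have h2 := Submodule.smul_mem _ ((u⁻¹ : (κ)ˣ) : κ) h1
    rwa [smul_smul, Units.inv_mul, one_smul] at h2
  rw [eq_top_iff]
  rintro z -
  induction z using TensorProduct.induction_on with
  | zero => exact Submodule.zero_mem _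
  | tmul c y =>
      have : c ⊗ₜ[R] y = c • ((1 : κ) ⊗ₜ[R] y) := by
        rw [TensorProduct.smul_tmul', smul_eq_mul, mul_one]
      rw [this]
      exact Submodule.smul_mem _ _ (key y)
  | add a b ha hb => exact Submodule.add_mem _ ha hb

lemma RFA.not_mem_support {Q : Type*} [AddCommGroup Q] [Module R Q] [Module.Finite R Q]
    (p : PrimeSpectrum R) (h : Subsingleton (residueFieldAt p ⊗[R] Q)) :
    p ∉ Module.support R Q := by
  set A := Localization.AtPrime p.asIdeal
  set W := LocalizedModule p.asIdeal.primeCompl Q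
  haveI : Module.Finite A W :=
    Module.Finite.of_isLocalizedModule p.asIdeal.primeCompl
      (LocalizedModule.mkLinearMap p.asIdeal.primeCompl Q)
  have e1 : A ⊗[R] Q ≃ₗ[A] W :=
    (IsLocalizedModule.isBaseChange p.asIdeal.primeCompl A
      (LocalizedModule.mkLinearMap p.asIdeal.primeCompl Q)).equiv
  have e2 : (residueFieldAt p) ⊗[A] (A ⊗[R] Q) ≃ₗ[residueFieldAt p] (residueFieldAt p) ⊗[R] Q :=
    TensorProduct.AlgebraTensorModule.cancelBaseChange R A (residueFieldAt p) (residueFieldAt p) Q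
  have e3 : (residueFieldAt p) ⊗[A] (A ⊗[R] Q) ≃ₗ[A] (residueFieldAt p) ⊗[A] W :=
    TensorProduct.congr (LinearEquiv.refl A (residueFieldAt p)) e1
  haveI h1 : Subsingleton ((residueFieldAt p) ⊗[A] (A ⊗[R] Q)) := e2.toEquiv.subsingleton
  haveI h2 : Subsingleton ((residueFieldAt p) ⊗[A] W) := e3.symm.toEquiv.subsingleton
  haveI h3 : Subsingleton W :=
    (IsLocalRing.subsingleton_tensorProduct (R := A) (M := W)).mp h2
  exact Module.notMem_support_iff.mpr h3

lemma RFA.isOpen_fdim_le {M : Type*} [AddCommGroup M] [Module R M] [Module.Finite R M] (n : ℕ) :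
    IsOpen {p : PrimeSpectrum R |
      Module.finrank (residueFieldAt p) (residueFieldAt p ⊗[R] M) ≤ n} := by
  classical
  rw [isOpen_iff_forall_mem_open]
  intro p hp
  set κ := residueFieldAt p with hκ
  set T : Set (κ ⊗[R] M) := Set.range (fun x : M => (1 : κ) ⊗ₜ[R] x) with hT
  have hTtop : Submodule.span κ T = ⊤ := by
    have := RFA.span_image_eq_top (R := R) (M := M) p Set.univ
      (fun y => ⟨1, p.asIdeal.primeCompl.one_mem, by simp⟩)
    rwa [Set.image_univ] at this
  obtain ⟨b, hbT, -, hTb, hbli⟩ :=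
    exists_linearIndepOn_id_extension (linearIndependent_empty κ (κ ⊗[R] M))
      (Set.empty_subset T)
  have hbspan : Submodule.span κ b = ⊤ := by
    rw [eq_top_iff, ← hTtop]
    exact Submodule.span_le.mpr hTb
  let bb : Module.Basis b κ (κ ⊗[R] M) :=
    Module.Basis.mk (v := ((↑) : b → κ ⊗[R] M)) hbli (by rw [Subtype.range_coe, hbspan])
  haveI : Fintype b := FiniteDimensional.fintypeBasisIndex bb
  have hcard : Fintype.card b ≤ n := by
    rw [← Module.finrank_eq_card_basis bb]
    exact hp
  have hx : ∀ v : b, ∃ x : M, (1 : κ) ⊗ₜ[R] x = (v : κ ⊗[R] M) := fun v => hbT v.2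
  choose xfun hxfun using hx
  set N : Submodule R M := Submodule.span R (Set.range xfun) with hN
  have hQsub : Subsingleton (κ ⊗[R] (M ⧸ N)) := by
    set ψ : κ ⊗[R] M →ₗ[κ] κ ⊗[R] (M ⧸ N) := N.mkQ.baseChange κ with hψ
    have hψs : Function.Surjective ψ := by
      intro z
      induction z using TensorProduct.induction_on with
      | zero => exact ⟨0, map_zero _⟩
      | tmul c q =>
          obtain ⟨y, rfl⟩ := N.mkQ_surjective q
          exact ⟨c ⊗ₜ y, by simp [hψ]⟩
      | add a b ha hb =>
          obtain ⟨a', rfl⟩ := ha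
          obtain ⟨b', rfl⟩ := hb
          exact ⟨a' + b', map_add _ _ _⟩
    have hψ0 : ∀ w : κ ⊗[R] M, ψ w = 0 := by
      intro w
      have hw : w ∈ Submodule.span κ b := by rw [hbspan]; trivial
      refine Submodule.span_induction ?_ ?_ ?_ ?_ hw
      · rintro v hv
        rw [← show (1 : κ) ⊗ₜ[R] xfun ⟨v, hv⟩ = v from hxfun ⟨v, hv⟩]
        have hxN : xfun ⟨v, hv⟩ ∈ N := Submodule.subset_span ⟨_, rfl⟩
        simp [hψ, (Submodule.Quotient.mk_eq_zero N).mpr hxN]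
      · simp
      · intro a b _ _ ha hb
        rw [map_add, ha, hb, add_zero]
      · intro c a _ ha
        rw [map_smul, ha, smul_zero]
    refine subsingleton_of_forall_eq 0 fun z => ?_
    obtain ⟨w, rfl⟩ := hψs z
    exact hψ0 w
  have hps : p ∉ Module.support R (M ⧸ N) := RFA.not_mem_support p hQsub
  refine ⟨(Module.support R (M ⧸ N))ᶜ, ?_, ?_, hps⟩
  · intro q hq
    rw [Set.mem_compl_iff, Module.notMem_support_iff'] at hq
    have hspan : Submodule.span (residueFieldAt q)
        ((fun x : M => (1 : residueFieldAt q) ⊗ₜ[R] x) '' (Set.range xfun)) = ⊤ := by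
      apply RFA.span_image_eq_top
      intro y
      obtain ⟨r, hr, hry⟩ := hq (Submodule.Quotient.mk y)
      refine ⟨r, hr, ?_⟩
      rwa [← Submodule.Quotient.mk_smul, Submodule.Quotient.mk_eq_zero] at hry
    rw [← Set.range_comp] at hspan
    set u : Finset (residueFieldAt q ⊗[R] M) :=
      Finset.univ.image ((fun x : M => (1 : residueFieldAt q) ⊗ₜ[R] x) ∘ xfun) with hu
    have hucoe : (u : Set (residueFieldAt q ⊗[R] M)) =
        Set.range ((fun x : M => (1 : residueFieldAt q) ⊗ₜ[R] x) ∘ xfun) := by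
      rw [hu, Finset.coe_image, Finset.coe_univ, Set.image_univ]
    have huspan : Submodule.span (residueFieldAt q) (u : Set (residueFieldAt q ⊗[R] M)) = ⊤ := by
      rw [hucoe]; exact hspan
    show Module.finrank (residueFieldAt q) (residueFieldAt q ⊗[R] M) ≤ n
    calc Module.finrank (residueFieldAt q) (residueFieldAt q ⊗[R] M)
        = Module.finrank (residueFieldAt q) (⊤ : Submodule (residueFieldAt q) (residueFieldAt q ⊗[R] M)) :=
          (finrank_top _ _).symm
      _ = Module.finrank (residueFieldAt q)
            (Submodule.span (residueFieldAt q) (u : Set (residueFieldAt q ⊗[R] M))) := by rw [huspan]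
      _ ≤ u.card := finrank_span_finset_le_card u
      _ ≤ Fintype.card b := by
          refine Finset.card_image_le.trans ?_
          simp
      _ ≤ n := hcard
  · rw [isOpen_compl_iff, Module.support_eq_zeroLocus]
    exact PrimeSpectrum.isClosed_zeroLocus _

lemma RFA.finrank_quot_core {M : Type*} [AddCommGroup M] [Module R M] [Module.Finite R M]
    (p : PrimeSpectrum R) (m : M) :
    Module.finrank (residueFieldAt p)
        (residueFieldAt p ⊗[R] (M ⧸ (Submodule.span R {m}))) +
      Module.finrank (residueFieldAt p)
        (Submodule.span (residueFieldAt p) {(1 : residueFieldAt p) ⊗ₜ[R] m}) =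
    Module.finrank (residueFieldAt p) (residueFieldAt p ⊗[R] M) := by
  set κ := residueFieldAt p with hκ
  set N : Submodule R M := Submodule.span R {m} with hN
  set ψ : κ ⊗[R] M →ₗ[κ] κ ⊗[R] (M ⧸ N) := N.mkQ.baseChange κ with hψ
  have hψs : Function.Surjective ψ := by
    intro z
    induction z using TensorProduct.induction_on with
    | zero => exact ⟨0, map_zero _⟩
    | tmul c q =>
        obtain ⟨y, rfl⟩ := N.mkQ_surjective q
        exact ⟨c ⊗ₜ y, by simp [hψ]⟩
    | add a b ha hb =>
        obtain ⟨a', rfl⟩ := ha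
        obtain ⟨b', rfl⟩ := hb
        exact ⟨a' + b', map_add _ _ _⟩
  have hker : LinearMap.ker ψ = Submodule.span κ {(1 : κ) ⊗ₜ[R] m} := by
    apply le_antisymm
    · intro z hz
      have hz' : z ∈ LinearMap.ker (LinearMap.lTensor κ N.mkQ) := by
        rw [LinearMap.mem_ker, ← LinearMap.baseChange_eq_ltensor]
        exact hz
      clear hz
      rw [lTensor_mkQ] at hz'
      obtain ⟨w, rfl⟩ := hz'
      induction w using TensorProduct.induction_on with
      | zero => simp
      | tmul c x =>
          obtain ⟨r, hr⟩ := Submodule.mem_span_singleton.mp x.2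
          have hval : (LinearMap.lTensor κ N.subtype) (c ⊗ₜ x) = c ⊗ₜ[R] (x : M) := by
            simp
          rw [hval, ← hr, tmul_smul, ← algebraMap_smul κ r]
          refine Submodule.smul_mem _ _ ?_
          have : c ⊗ₜ[R] m = c • ((1 : κ) ⊗ₜ[R] m) := by
            rw [TensorProduct.smul_tmul', smul_eq_mul, mul_one]
          rw [this]
          exact Submodule.smul_mem _ _ (Submodule.subset_span rfl)
      | add a b ha hb =>
          rw [map_add]
          exact Submodule.add_mem _ ha hb
    · rw [Submodule.span_singleton_le_iff_mem, LinearMap.mem_ker, hψ,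
        LinearMap.baseChange_tmul, Submodule.mkQ_apply,
        (Submodule.Quotient.mk_eq_zero N).mpr (Submodule.mem_span_singleton_self m),
        tmul_zero]
  have h1 := LinearMap.finrank_range_add_finrank_ker ψ
  rwa [LinearMap.range_eq_top.mpr hψs, finrank_top, hker] at h1

lemma RFA.finrank_quot_of_eq_zero {M : Type*} [AddCommGroup M] [Module R M] [Module.Finite R M]
    (p : PrimeSpectrum R) (m : M) (h : (1 : residueFieldAt p) ⊗ₜ[R] m = 0) :
    Module.finrank (residueFieldAt p) (residueFieldAt p ⊗[R] M) =
      Module.finrank (residueFieldAt p)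
        (residueFieldAt p ⊗[R] (M ⧸ (Submodule.span R {m}))) := by
  have h1 := RFA.finrank_quot_core (R := R) p m
  rw [h, Submodule.span_zero_singleton, finrank_bot, add_zero] at h1
  exact h1.symm

lemma RFA.finrank_quot_of_ne_zero {M : Type*} [AddCommGroup M] [Module R M] [Module.Finite R M]
    (p : PrimeSpectrum R) (m : M) (h : (1 : residueFieldAt p) ⊗ₜ[R] m ≠ 0) :
    Module.finrank (residueFieldAt p) (residueFieldAt p ⊗[R] M) =
      Module.finrank (residueFieldAt p)
        (residueFieldAt p ⊗[R] (M ⧸ (Submodule.span R {m}))) + 1 := by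
  have h1 := RFA.finrank_quot_core (R := R) p m
  rw [finrank_span_singleton h] at h1
  exact h1.symm

lemma RFA.fdim_le {M : Type*} [AddCommGroup M] [Module R M]
    (s : Finset M) (hs : Submodule.span R (↑s : Set M) = ⊤) (p : PrimeSpectrum R) :
    Module.finrank (residueFieldAt p) (residueFieldAt p ⊗[R] M) ≤ s.card := by
  classical
  have hspan := RFA.span_image_eq_top (R := R) (M := M) p (↑s : Set M)
    (fun y => ⟨1, p.asIdeal.primeCompl.one_mem, by rw [hs]; trivial⟩)
  set u : Finset (residueFieldAt p ⊗[R] M) :=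
    s.image (fun x : M => (1 : residueFieldAt p) ⊗ₜ[R] x) with hu
  have huspan : Submodule.span (residueFieldAt p) (u : Set (residueFieldAt p ⊗[R] M)) = ⊤ := by
    rw [hu, Finset.coe_image]; exact hspan
  calc Module.finrank (residueFieldAt p) (residueFieldAt p ⊗[R] M)
      = Module.finrank (residueFieldAt p) (⊤ : Submodule (residueFieldAt p) (residueFieldAt p ⊗[R] M)) :=
        (finrank_top _ _).symm
    _ = Module.finrank (residueFieldAt p)
          (Submodule.span (residueFieldAt p) (u : Set (residueFieldAt p ⊗[R] M))) := by rw [huspan]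
    _ ≤ u.card := finrank_span_finset_le_card u
    _ ≤ s.card := Finset.card_image_le

end Aux

open TensorProduct in
/-- Let `k` be an algebraically closed field, `R` a reduced finitely generated `k`-algebra,
`M` a finitely generated `R`-module and `m ∈ M`. Then the nonvanishing locus
`D(m) = { p ∈ Spec R | the image of m in M ⊗_R κ(p) is nonzero }` is constructible. -/
theorem stmt_2 (k : Type*) [Field k] [IsAlgClosed k]
    (R : Type*) [CommRing R] [IsReduced R] [Algebra k R] [Algebra.FiniteType k R]
    (M : Type*) [AddCommGroup M] [Module R M] [Module.Finite R M] (m : M) :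
    IsConstructibleSet { p : PrimeSpectrum R |
      (m ⊗ₜ[R] (1 : residueFieldAt p) : M ⊗[R] residueFieldAt p) ≠ 0 } := by
  classical
  obtain ⟨s, hs⟩ := Module.Finite.fg_top (R := R) (M := M)
  set dM : PrimeSpectrum R → ℕ :=
    fun p => Module.finrank (residueFieldAt p) (residueFieldAt p ⊗[R] M) with hdM
  set dQ : PrimeSpectrum R → ℕ :=
    fun p => Module.finrank (residueFieldAt p)
      (residueFieldAt p ⊗[R] (M ⧸ (Submodule.span R {m}))) with hdQ
  have hiff : ∀ p : PrimeSpectrum R,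
      (m ⊗ₜ[R] (1 : residueFieldAt p) : M ⊗[R] residueFieldAt p) = 0 ↔
        (1 : residueFieldAt p) ⊗ₜ[R] m = 0 := by
    intro p
    rw [← LinearEquiv.map_eq_zero_iff (TensorProduct.comm R M (residueFieldAt p)),
      TensorProduct.comm_tmul]
  refine ⟨(Finset.range (s.card + 1)).image
    (fun n => ({p : PrimeSpectrum R | dQ p ≤ n}, {p : PrimeSpectrum R | dM p ≤ n}ᶜ)), ?_, ?_⟩
  · rintro t ht
    simp only [Finset.mem_image] at ht
    obtain ⟨n, -, rfl⟩ := ht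
    exact ⟨RFA.isOpen_fdim_le n, (RFA.isOpen_fdim_le n).isClosed_compl⟩
  · ext p
    simp only [Set.mem_setOf_eq, Set.mem_iUnion, Finset.mem_image, exists_prop,
      Finset.mem_range, Set.mem_inter_iff, Set.mem_compl_iff, not_le]
    constructor
    · intro hne
      have hone : (1 : residueFieldAt p) ⊗ₜ[R] m ≠ 0 := fun h0 => hne ((hiff p).mpr h0)
      have heq : dM p = dQ p + 1 := RFA.finrank_quot_of_ne_zero (R := R) p m hone
      have hle : dM p ≤ s.card := RFA.fdim_le s hs p
      refine ⟨({p' : PrimeSpectrum R | dQ p' ≤ dQ p}, {p' : PrimeSpectrum R | dM p' ≤ dQ p}ᶜ),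
        ⟨dQ p, by omega, rfl⟩, ?_, ?_⟩
      · show dQ p ≤ dQ p
        exact le_rfl
      · show ¬ dM p ≤ dQ p
        omega
    · rintro ⟨t, ⟨n, -, rfl⟩, hQle, hMgt⟩
      intro h0
      have hone : (1 : residueFieldAt p) ⊗ₜ[R] m = 0 := (hiff p).mp h0
      have heq : dM p = dQ p := RFA.finrank_quot_of_eq_zero (R := R) p m hone
      have hQle' : dQ p ≤ n := hQle
      have hMgt' : ¬ dM p ≤ n := hMgt
      omega
end

section
/- Let k be a field, R a finitely generated k-algebra which is an integral domain, M a finitely generated torsion-free R-module, and m ∈ M a nonzero element. Then the set D(m) = { p ∈ Spec R : the image of m under the natural map M → M ⊗_R κ(p) is nonzero } contains a nonempty open subset of Spec R; in particular, since Spec R is irreducible, D(m) is dense in Spec R. -/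
open TensorProduct in
/-- Auxiliary: there is an `R`-linear functional `φ : M →ₗ[R] R` with `φ m ≠ 0`. -/
theorem exists_functional_ne_zero
    (R : Type*) [CommRing R] [IsDomain R]
    (M : Type*) [AddCommGroup M] [Module R M] [Module.Finite R M] [NoZeroSMulDivisors R M]
    (m : M) (hm : m ≠ 0) : ∃ φ : M →ₗ[R] R, φ m ≠ 0 := by
  classical
  set K := FractionRing R
  have hinj : Function.Injective (algebraMap R K) := IsFractionRing.injective R K
  -- `1 ⊗ m ≠ 0` in `K ⊗[R] M`
  have hbc : IsBaseChange K (LocalizedModule.mkLinearMap (nonZeroDivisors R) M) :=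
    IsLocalizedModule.isBaseChange (nonZeroDivisors R) K _
  have h1 : (1 : K) ⊗ₜ[R] m ≠ 0 := by
    intro h
    have h2 := congrArg hbc.equiv h
    rw [map_zero, hbc.equiv_tmul, one_smul] at h2
    rw [IsLocalizedModule.eq_zero_iff (nonZeroDivisors R)] at h2
    obtain ⟨s, hs⟩ := h2
    rcases smul_eq_zero.mp hs with h | h
    · exact nonZeroDivisors.coe_ne_zero s h
    · exact hm h
  -- a `K`-linear functional detecting `1 ⊗ m`
  have hforall : ¬ ∀ ψ : Module.Dual K (K ⊗[R] M), ψ ((1 : K) ⊗ₜ[R] m) = 0 := by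
    rw [Module.forall_dual_apply_eq_zero_iff]
    exact h1
  push_neg at hforall
  obtain ⟨ψ, hψ⟩ := hforall
  set φ' : M →ₗ[R] K := (ψ.restrictScalars R) ∘ₗ (TensorProduct.mk R K M 1) with hφ'
  have hφ'm : φ' m = ψ ((1 : K) ⊗ₜ[R] m) := rfl
  -- clear denominators on a generating set
  obtain ⟨n, g, hg⟩ := Module.Finite.exists_fin (R := R) (M := M)
  obtain ⟨b, hb⟩ := IsLocalization.exist_integer_multiples_of_finite
    (nonZeroDivisors R) (fun i : Fin n => φ' (g i))
  set φ'' : M →ₗ[R] K := (b : R) • φ' with hφ''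
  have key : ∀ x : M, ∃ r : R, algebraMap R K r = φ'' x := by
    intro x
    have hx : x ∈ Submodule.span R (Set.range g) := hg ▸ Submodule.mem_top
    induction hx using Submodule.span_induction with
    | mem x hx =>
      obtain ⟨i, rfl⟩ := hx
      obtain ⟨r, hr⟩ := hb i
      exact ⟨r, by simpa [hφ'', Submonoid.smul_def] using hr⟩
    | zero => exact ⟨0, by simp⟩
    | add x y _ _ hx hy =>
      obtain ⟨r₁, h₁⟩ := hx; obtain ⟨r₂, h₂⟩ := hy
      exact ⟨r₁ + r₂, by rw [map_add, map_add, h₁, h₂]⟩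
    | smul r x _ hx =>
      obtain ⟨r₁, h₁⟩ := hx
      exact ⟨r * r₁, by rw [map_mul, map_smul, h₁, Algebra.smul_def]⟩
  -- the functional with values in `R`
  refine ⟨{ toFun := fun x => (key x).choose
            map_add' := fun x y => hinj ?_
            map_smul' := fun r x => hinj ?_ }, ?_⟩
  · rw [map_add (algebraMap R K), (key (x + y)).choose_spec, (key x).choose_spec, (key y).choose_spec, map_add]
  · rw [(key (r • x)).choose_spec, RingHom.id_apply, smul_eq_mul, map_mul, (key x).choose_spec,
      map_smul, Algebra.smul_def]
  · intro h0
    have h0' : (key m).choose = 0 := h0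
    have := (key m).choose_spec
    rw [h0', map_zero] at this
    have hb0 : algebraMap R K (b : R) ≠ 0 := by
      intro hc
      exact nonZeroDivisors.coe_ne_zero b (hinj (by simp [hc]))
    have : (0 : K) = (b : R) • ψ ((1 : K) ⊗ₜ[R] m) := by
      simpa [hφ'', hφ'm] using this
    rw [Algebra.smul_def] at this
    exact hψ ((mul_eq_zero.mp this.symm).resolve_left hb0)

open TensorProduct in
/-- Let `k` be a field, `R` a finitely generated `k`-algebra which is a domain, `M` a finitely
generated torsion-free `R`-module, and `m ∈ M` nonzero. Then the nonvanishing locus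
`D(m) = { p ∈ Spec R | the image of m in M ⊗_R κ(p) is nonzero }` contains a nonempty open
subset of `Spec R`, and in particular is dense. -/
theorem stmt_3 (k : Type*) [Field k]
    (R : Type*) [CommRing R] [IsDomain R] [Algebra k R] [Algebra.FiniteType k R]
    (M : Type*) [AddCommGroup M] [Module R M] [Module.Finite R M] [NoZeroSMulDivisors R M]
    (m : M) (hm : m ≠ 0) :
    (∃ U : Set (PrimeSpectrum R), IsOpen U ∧ U.Nonempty ∧
      U ⊆ { p : PrimeSpectrum R |
        (m ⊗ₜ[R] (1 : residueFieldAt p) : M ⊗[R] residueFieldAt p) ≠ 0 }) ∧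
    Dense { p : PrimeSpectrum R |
      (m ⊗ₜ[R] (1 : residueFieldAt p) : M ⊗[R] residueFieldAt p) ≠ 0 } := by
  obtain ⟨φ, hφ⟩ := exists_functional_ne_zero R M m hm
  set f : R := φ m with hf
  have hUopen : IsOpen (↑(PrimeSpectrum.basicOpen f) : Set (PrimeSpectrum R)) :=
    (PrimeSpectrum.basicOpen f).isOpen
  have hUne : (↑(PrimeSpectrum.basicOpen f) : Set (PrimeSpectrum R)).Nonempty := by
    rw [← TopologicalSpace.Opens.ne_bot_iff_nonempty]
    intro hc
    rw [PrimeSpectrum.basicOpen_eq_bot_iff, isNilpotent_iff_eq_zero] at hc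
    exact hφ hc
  have hsub : (↑(PrimeSpectrum.basicOpen f) : Set (PrimeSpectrum R)) ⊆
      { p : PrimeSpectrum R |
        (m ⊗ₜ[R] (1 : residueFieldAt p) : M ⊗[R] residueFieldAt p) ≠ 0 } := by
    intro p hp
    simp only [Set.mem_setOf_eq]
    intro h0
    -- build the evaluation map `M ⊗ κ(p) → κ(p)`
    set κ := residueFieldAt p
    set Φ : M ⊗[R] κ →ₗ[R] κ :=
      (TensorProduct.lid R κ).toLinearMap ∘ₗ LinearMap.rTensor κ φ with hΦ
    have hΦm : Φ (m ⊗ₜ[R] (1 : κ)) = algebraMap R κ f := by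
      simp [hΦ, LinearMap.rTensor_tmul, TensorProduct.lid_tmul, Algebra.algebraMap_eq_smul_one, hf]
    have hfun : algebraMap R κ f ≠ 0 := by
      have htower : algebraMap R κ f =
          algebraMap (Localization.AtPrime p.asIdeal) κ
            (algebraMap R (Localization.AtPrime p.asIdeal) f) :=
        IsScalarTower.algebraMap_apply R (Localization.AtPrime p.asIdeal) κ f
      rw [htower]
      intro hz
      have hmem : algebraMap R (Localization.AtPrime p.asIdeal) f ∈
          IsLocalRing.maximalIdeal (Localization.AtPrime p.asIdeal) :=
        Ideal.Quotient.eq_zero_iff_mem.mp hz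
      have hunit : IsUnit (algebraMap R (Localization.AtPrime p.asIdeal) f) :=
        (IsLocalization.AtPrime.isUnit_to_map_iff
          (Localization.AtPrime p.asIdeal) p.asIdeal f).mpr hp
      exact (IsLocalRing.maximalIdeal.isMaximal _).ne_top
        (Ideal.eq_top_of_isUnit_mem _ hmem hunit)
    apply hfun
    rw [← hΦm, h0, map_zero]
  refine ⟨⟨_, hUopen, hUne, hsub⟩, ?_⟩
  exact Dense.mono hsub (hUopen.dense hUne)
end

section
/- Let X be a topological space which is sober, Noetherian, irreducible, and of topological Krull dimension at most 1. Then every constructible subset of X is either open or closed; moreover, any such constructible subset which is closed and proper is a finite set of closed points. -/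
section Aux

open TopologicalSpace

variable {X : Type*} [TopologicalSpace X] [QuasiSober X] [T0Space X]
    [TopologicalSpace.NoetherianSpace X] [IrreducibleSpace X]

lemma aux_closed_point (hdim : topologicalKrullDim X ≤ 1) {x : X}
    (hx : closure ({x} : Set X) ≠ Set.univ) : IsClosed ({x} : Set X) := by
  have key : closure ({x} : Set X) = {x} := by
    apply Set.Subset.antisymm _ subset_closure
    intro y hy
    have hsub : closure ({y} : Set X) ⊆ closure ({x} : Set X) :=
      closure_minimal (Set.singleton_subset_iff.2 hy) isClosed_closure
    by_cases heq : closure ({y} : Set X) = closure ({x} : Set X)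
    · have : y = x := (inseparable_iff_closure_eq.2 heq).eq
      simp [this]
    · exfalso
      -- chain of length 2
      set a : IrreducibleCloseds X :=
        ⟨closure {y}, isIrreducible_singleton.closure, isClosed_closure⟩
      set b : IrreducibleCloseds X :=
        ⟨closure {x}, isIrreducible_singleton.closure, isClosed_closure⟩
      set c : IrreducibleCloseds X :=
        ⟨Set.univ, IrreducibleSpace.isIrreducible_univ X, isClosed_univ⟩
      have hab : a < b := lt_of_le_of_ne hsub (fun h => heq (congrArg (fun (t : IrreducibleCloseds X) => t.carrier) h))
      have hbc : b < c := lt_of_le_of_ne (fun z _ => trivial)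
        (fun h => hx (congrArg (fun (t : IrreducibleCloseds X) => t.carrier) h))
      let p : LTSeries (IrreducibleCloseds X) :=
        ((RelSeries.singleton _ a).snoc b hab).snoc c
          (by exact hbc)
      have hlen : p.length = 2 := rfl
      have h2 : (2 : WithBot ℕ∞) ≤ topologicalKrullDim X := by
        have := Order.LTSeries.length_le_krullDim p
        rwa [hlen] at this
      have : (2 : WithBot ℕ∞) ≤ 1 := h2.trans hdim
      exact absurd this (by decide)
  rw [← key]; exact isClosed_closure

lemma aux_proper_closed (hdim : topologicalKrullDim X ≤ 1) {Z : Set X}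
    (hZ : IsClosed Z) (hne : Z ≠ Set.univ) :
    Z.Finite ∧ ∀ x ∈ Z, IsClosed ({x} : Set X) := by
  have hpt : ∀ x ∈ Z, IsClosed ({x} : Set X) := by
    intro x hx
    apply aux_closed_point hdim
    intro h
    exact hne (Set.univ_subset_iff.1 (h ▸ closure_minimal (Set.singleton_subset_iff.2 hx) hZ))
  refine ⟨?_, hpt⟩
  obtain ⟨S, hSf, hScl, hSirr, rfl⟩ :=
    TopologicalSpace.NoetherianSpace.exists_finite_set_isClosed_irreducible hZ
  apply Set.Finite.sUnion hSf
  intro t ht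
  have htZ : t ⊆ ⋃₀ S := Set.subset_sUnion_of_mem ht
  obtain ⟨gp, hgp⟩ : ∃ g : X, closure {g} = t :=
    ⟨_, (hSirr t ht).closure_genericPoint (hScl t ht)⟩
  have hmem : gp ∈ t := hgp ▸ subset_closure rfl
  have hcl : IsClosed ({gp} : Set X) := hpt _ (htZ hmem)
  have : t = {gp} := by rw [← hgp, hcl.closure_eq]
  rw [this]; exact Set.finite_singleton _

lemma aux_finite_closed {F : Set X} (hF : F.Finite) (h : ∀ x ∈ F, IsClosed ({x} : Set X)) :
    IsClosed F := by
  rw [show F = ⋃ x ∈ F, {x} by simp]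
  exact hF.isClosed_biUnion h

theorem stmt_4' (hdim : topologicalKrullDim X ≤ 1)
    (C : Set X)
    (hC : ∃ S : Finset (Set X × Set X),
      (∀ t ∈ S, IsOpen t.1 ∧ IsClosed t.2) ∧ C = ⋃ t ∈ S, t.1 ∩ t.2) :
    (IsOpen C ∨ IsClosed C) ∧
      (IsClosed C → C ≠ Set.univ → C.Finite ∧ ∀ x ∈ C, IsClosed ({x} : Set X)) := by
  obtain ⟨S, hS, rfl⟩ := hC
  set C := ⋃ t ∈ S, t.1 ∩ t.2 with hCdef
  refine ⟨?_, fun hcl hne => aux_proper_closed hdim hcl hne⟩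
  set S1 : Set (Set X × Set X) := {t | t ∈ S ∧ t.2 = Set.univ} with hS1
  set S2 : Set (Set X × Set X) := {t | t ∈ S ∧ t.2 ≠ Set.univ} with hS2
  set U : Set X := ⋃ t ∈ S1, t.1 with hUdef
  set B : Set X := ⋃ t ∈ S2, t.1 ∩ t.2 with hBdef
  have hUopen : IsOpen U := isOpen_biUnion fun t ht => (hS t ht.1).1
  have hsplit : C = U ∪ B := by
    ext x
    simp only [hCdef, hUdef, hBdef, hS1, hS2, Set.mem_iUnion, Set.mem_union,
      Set.mem_inter_iff, Set.mem_setOf_eq, exists_prop]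
    constructor
    · rintro ⟨t, htS, hx1, hx2⟩
      by_cases h : t.2 = Set.univ
      · exact Or.inl ⟨t, ⟨htS, h⟩, hx1⟩
      · exact Or.inr ⟨t, ⟨htS, h⟩, hx1, hx2⟩
    · rintro (⟨t, ⟨htS, h⟩, hx1⟩ | ⟨t, ⟨htS, _⟩, hx1, hx2⟩)
      · exact ⟨t, htS, hx1, h ▸ Set.mem_univ x⟩
      · exact ⟨t, htS, hx1, hx2⟩
  have hBprop : B.Finite ∧ ∀ x ∈ B, IsClosed ({x} : Set X) := by
    have hS2fin : S2.Finite := S.finite_toSet.subset fun t ht => ht.1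
    constructor
    · apply hS2fin.biUnion
      intro t ht
      exact ((aux_proper_closed hdim (hS t ht.1).2 ht.2).1).subset Set.inter_subset_right
    · intro x hx
      simp only [hBdef, Set.mem_iUnion, exists_prop] at hx
      obtain ⟨t, ht, _, hx2⟩ := hx
      exact (aux_proper_closed hdim (hS t ht.1).2 ht.2).2 x hx2
  by_cases hUe : U = ∅
  · right
    rw [hsplit, hUe, Set.empty_union]
    exact aux_finite_closed hBprop.1 hBprop.2
  · left
    rw [← isClosed_compl_iff]
    have hUc : Uᶜ ≠ Set.univ := by
      intro h
      exact hUe (by simpa using congrArg compl h)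
    have hUcfin := aux_proper_closed hdim hUopen.isClosed_compl hUc
    have hsub : Cᶜ ⊆ Uᶜ := by rw [hsplit]; exact Set.compl_subset_compl.2 Set.subset_union_left
    exact aux_finite_closed (hUcfin.1.subset hsub) (fun x hx => hUcfin.2 x (hsub hx))

end Aux

/-- In a sober, Noetherian, irreducible topological space of topological Krull dimension at
most one, every constructible subset is open or closed; moreover any constructible subset that
is closed and proper is a finite set of closed points. -/
theorem stmt_4 (X : Type*) [TopologicalSpace X] [QuasiSober X] [T0Space X]
    [TopologicalSpace.NoetherianSpace X] [IrreducibleSpace X]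
    (hdim : topologicalKrullDim X ≤ 1)
    (C : Set X) (hC : IsConstructibleSet C) :
    (IsOpen C ∨ IsClosed C) ∧
      (IsClosed C → C ≠ Set.univ → C.Finite ∧ ∀ x ∈ C, IsClosed ({x} : Set X)) := by
  exact stmt_4' hdim C hC
end
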